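/- arXiv:1907.12589 — 2 statements merged into one kernel-verified Lean document; each statement's English description precedes it below -/
import Mathlib

section
/- Fix b > 0. Then the ratio of the FAB p-value to the UMPU p-value diverges as z tends to negative infinity: p(z,b)/p(z,0) → ∞ as z → −∞. -/
open MeasureTheory ProbabilityTheory Filter

/-- Φ, the standard normal cumulative distribution function. -/
noncomputable def Phi : ℝ → ℝ := fun x => ProbabilityTheory.cdf (gaussianReal 0 1) x

/-- The FAB p-value function. -/
noncomputable def fabP (z b : ℝ) : ℝ := 1 - |Phi (z + b) - Phi (-z)|

open Set Real Topology

/-- The standard normal density. -/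
noncomputable def phiD (x : ℝ) : ℝ := (Real.sqrt (2 * Real.pi))⁻¹ * Real.exp (-x ^ 2 / 2)

lemma phiD_eq (x : ℝ) : gaussianPDFReal 0 1 x = phiD x := by
  simp [gaussianPDFReal, phiD]

lemma phiD_pos (x : ℝ) : 0 < phiD x := by
  have : 0 < Real.pi := Real.pi_pos
  unfold phiD; positivity

lemma integrable_phiD : Integrable phiD := by
  have := integrable_gaussianPDFReal 0 1
  simpa [funext phiD_eq] using this

lemma Phi_eq (x : ℝ) : Phi x = ∫ t in Iic x, phiD t := by
  rw [Phi, cdf_eq_real, measureReal_def, gaussianReal_apply_eq_integral 0 one_ne_zero,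
    ENNReal.toReal_ofReal (integral_nonneg fun t => gaussianPDFReal_nonneg 0 1 t)]
  exact integral_congr_ae (Filter.Eventually.of_forall fun t => phiD_eq t)

lemma Phi_pos (x : ℝ) : 0 < Phi x := by
  rw [Phi_eq]
  rw [setIntegral_pos_iff_support_of_nonneg_ae
    (Filter.Eventually.of_forall fun t => (phiD_pos t).le) integrable_phiD.integrableOn]
  have hsupp : Function.support phiD = Set.univ := by
    ext t; simp [Function.mem_support, (phiD_pos t).ne']
  rw [hsupp, Set.univ_inter]
  simp [Real.volume_Iic]

lemma Phi_mono : Monotone Phi := monotone_cdf _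

lemma integral_phiD : ∫ t, phiD t = 1 := by
  have := integral_gaussianPDFReal_eq_one 0 (one_ne_zero (α := NNReal))
  simpa [funext phiD_eq] using this

lemma Phi_neg (x : ℝ) : Phi (-x) = 1 - Phi x := by
  have hcomp : (∫ t in Ioi x, phiD (-t)) = ∫ t in Iic (-x), phiD t :=
    integral_comp_neg_Ioi x phiD
  have heven : ∀ t, phiD (-t) = phiD t := fun t => by simp [phiD]
  have h1 : (∫ t in Ioi x, phiD t) = ∫ t in Iic (-x), phiD t := by
    rw [← hcomp]; exact integral_congr_ae (Filter.Eventually.of_forall fun t => (heven t).symm)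
  have h2 : (∫ t in Iic x, phiD t) + ∫ t in Ioi x, phiD t = 1 := by
    rw [intervalIntegral.integral_Iic_add_Ioi integrable_phiD.integrableOn integrable_phiD.integrableOn,
      integral_phiD]
  rw [Phi_eq, Phi_eq, ← h1]
  linarith

lemma Phi_lower {z b : ℝ} (hb : 0 < b) (hzb : z + b ≤ 0) :
    b * phiD z ≤ Phi (z + b) - Phi z := by
  rw [Phi_eq, Phi_eq,
    intervalIntegral.integral_Iic_sub_Iic integrable_phiD.integrableOn integrable_phiD.integrableOn,
    intervalIntegral.integral_of_le (by linarith)]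
  have key : phiD z * (volume (Ioc z (z + b))).toReal ≤ ∫ t in Ioc z (z + b), phiD t := by
    refine setIntegral_ge_of_const_le_real measurableSet_Ioc ?_ ?_ integrable_phiD.integrableOn
    · simp [Real.volume_Ioc]
    · intro t ht
      have h1 : z < t := ht.1
      have h2 : t ≤ z + b := ht.2
      have hsq : t ^ 2 ≤ z ^ 2 := by nlinarith
      unfold phiD
      have hc : (0:ℝ) ≤ (Real.sqrt (2 * Real.pi))⁻¹ := by positivity
      exact mul_le_mul_of_nonneg_left (Real.exp_le_exp.mpr (by linarith)) hc
  have hvol : (volume (Ioc z (z + b))).toReal = b := by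
    rw [Real.volume_Ioc, ENNReal.toReal_ofReal (by linarith)]
    ring
  rw [hvol, mul_comm] at key
  exact key

lemma integrable_mul_exp : Integrable (fun t : ℝ => t * Real.exp (-t ^ 2 / 2)) := by
  have h := integrable_mul_exp_neg_mul_sq (show (0:ℝ) < 1/2 by norm_num)
  have heq : (fun x : ℝ => x * Real.exp (-(1/2) * x ^ 2)) =
      fun t : ℝ => t * Real.exp (-t ^ 2 / 2) := by
    funext x; ring_nf
  rwa [heq] at h

lemma integral_Iic_mul_exp (z : ℝ) :
    ∫ t in Iic z, t * Real.exp (-t ^ 2 / 2) = -Real.exp (-z ^ 2 / 2) := by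
  have hderiv : ∀ t ∈ Iic z, HasDerivAt (fun t : ℝ => -Real.exp (-t ^ 2 / 2))
      (t * Real.exp (-t ^ 2 / 2)) t := by
    intro t _
    have h1 : HasDerivAt (fun t : ℝ => -t ^ 2 / 2) (-t) t := by
      have h0 := ((hasDerivAt_pow 2 t).neg).div_const 2
      refine h0.congr_deriv ?_
      push_cast
      ring
    have h2 := (h1.exp).neg
    refine h2.congr_deriv ?_
    ring
  have hsq : Tendsto (fun t : ℝ => t ^ 2) atBot atTop := by
    have h1 : Tendsto (fun t : ℝ => (-t) ^ 2) atBot atTop :=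
      (tendsto_pow_atTop (by norm_num : 2 ≠ 0)).comp tendsto_neg_atBot_atTop
    exact h1.congr fun t => by ring
  have hdiv : Tendsto (fun t : ℝ => t ^ 2 / 2) atBot atTop := hsq.atTop_div_const (by norm_num)
  have hnegArg : Tendsto (fun t : ℝ => -t ^ 2 / 2) atBot atBot :=
    (tendsto_neg_atTop_atBot.comp hdiv).congr (fun t => by simp only [Function.comp_apply]; ring)
  have htend : Tendsto (fun t : ℝ => -Real.exp (-t ^ 2 / 2)) atBot (𝓝 0) := by
    rw [show (0:ℝ) = -0 by ring]
    exact (Real.tendsto_exp_atBot.comp hnegArg).neg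
  have := integral_Iic_of_hasDerivAt_of_tendsto' hderiv integrable_mul_exp.integrableOn htend
  simpa using this

lemma Phi_mills {z : ℝ} (hz : z < 0) : Phi z ≤ phiD z / (-z) := by
  have hznz : z ≠ 0 := hz.ne
  set c : ℝ := (Real.sqrt (2 * Real.pi))⁻¹ with hc
  have hcpos : 0 < c := by
    have : 0 < Real.pi := Real.pi_pos
    positivity
  have hmono : ∀ t ∈ Iic z, phiD t ≤ (z⁻¹ * c) * (t * Real.exp (-t ^ 2 / 2)) := by
    intro t ht
    have htz : t ≤ z := ht
    have h1 : (1 : ℝ) ≤ t / z := by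
      rw [le_div_iff_of_neg hz]
      linarith
    have hppos : 0 < Real.exp (-t ^ 2 / 2) := Real.exp_pos _
    have : phiD t = c * Real.exp (-t ^ 2 / 2) := rfl
    rw [this]
    have hgoal : c * Real.exp (-t ^ 2 / 2) ≤ (t / z) * (c * Real.exp (-t ^ 2 / 2)) :=
      le_mul_of_one_le_left (by positivity) h1
    calc c * Real.exp (-t ^ 2 / 2) ≤ (t / z) * (c * Real.exp (-t ^ 2 / 2)) := hgoal
      _ = (z⁻¹ * c) * (t * Real.exp (-t ^ 2 / 2)) := by ring
  have hint : IntegrableOn (fun t => (z⁻¹ * c) * (t * Real.exp (-t ^ 2 / 2))) (Iic z) :=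
    (integrable_mul_exp.const_mul _).integrableOn
  have hle : Phi z ≤ ∫ t in Iic z, (z⁻¹ * c) * (t * Real.exp (-t ^ 2 / 2)) := by
    rw [Phi_eq]
    exact setIntegral_mono_on integrable_phiD.integrableOn hint measurableSet_Iic hmono
  have heval : (∫ t in Iic z, (z⁻¹ * c) * (t * Real.exp (-t ^ 2 / 2)))
      = (z⁻¹ * c) * (-Real.exp (-z ^ 2 / 2)) := by
    rw [integral_const_mul, integral_Iic_mul_exp]
  rw [heval] at hle
  have heq2 : (z⁻¹ * c) * (-Real.exp (-z ^ 2 / 2)) = phiD z / (-z) := by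
    have h3 : phiD z = c * Real.exp (-z ^ 2 / 2) := rfl
    rw [h3, div_neg, div_eq_mul_inv]
    ring
  linarith [heq2 ▸ hle]

lemma fabP_eq_b {z b : ℝ} (hb : 0 ≤ b) (hzb : z + b ≤ 0) :
    fabP z b = Phi z + Phi (z + b) := by
  have h1 : Phi (z + b) ≤ Phi (-z) := Phi_mono (by linarith)
  rw [fabP, abs_of_nonpos (by linarith), Phi_neg]
  ring

theorem stmt_9 (b : ℝ) (hb : 0 < b) :
    Tendsto (fun z : ℝ => fabP z b / fabP z 0) atBot atTop := by
  have hlin : Tendsto (fun z : ℝ => -z * (b / 2)) atBot atTop :=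
    tendsto_neg_atBot_atTop.atTop_mul_const (by positivity)
  refine tendsto_atTop_mono' atBot ?_ hlin
  filter_upwards [eventually_le_atBot (min (-b) (-1))] with z hz
  have hzb : z ≤ -b := le_trans hz (min_le_left _ _)
  have hz1 : z ≤ -1 := le_trans hz (min_le_right _ _)
  have hz0 : z < 0 := by linarith
  have hA : fabP z b = Phi z + Phi (z + b) := fabP_eq_b hb.le (by linarith)
  have hB : fabP z 0 = 2 * Phi z := by
    have := fabP_eq_b (le_refl (0:ℝ)) (by linarith : z + 0 ≤ 0)
    rw [this]; rw [add_zero]; ring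
  have hPz : 0 < Phi z := Phi_pos z
  have hlow : b * phiD z ≤ Phi (z + b) - Phi z := Phi_lower hb (by linarith)
  have hmills : Phi z ≤ phiD z / (-z) := Phi_mills hz0
  have hmills' : (-z) * Phi z ≤ phiD z := by
    rw [le_div_iff₀ (by linarith : (0:ℝ) < -z)] at hmills
    linarith [hmills]
  rw [hA, hB, le_div_iff₀ (by positivity : (0:ℝ) < 2 * Phi z)]
  have hkey : b * ((-z) * Phi z) ≤ b * phiD z := by
    exact mul_le_mul_of_nonneg_left hmills' hb.le
  nlinarith [hPz, hlow, hkey]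
end

section
/- The FAB p-value function is strictly decreasing in the distance of z from −b/2: for all b ∈ ℝ and all z₁, z₂ ∈ ℝ with |z₁ + b/2| < |z₂ + b/2|, one has p(z₂, b) < p(z₁, b). In particular p(z,b) attains its maximum value 1 uniquely at z = −b/2. -/
open MeasureTheory ProbabilityTheory

lemma Phi_strictMono : StrictMono Phi := by
  intro x y hxy
  have hac : (volume : Measure ℝ) ≪ gaussianReal 0 1 :=
    gaussianReal_absolutelyContinuous' 0 one_ne_zero
  have hne : gaussianReal 0 1 (Set.Ioc x y) ≠ 0 := by
    intro h
    have := hac h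
    rw [Real.volume_Ioc] at this
    simp only [ENNReal.ofReal_eq_zero, sub_nonpos] at this
    linarith
  have hsplit : Set.Iic y = Set.Iic x ∪ Set.Ioc x y := (Set.Iic_union_Ioc_eq_Iic hxy.le).symm
  have hdisj : Disjoint (Set.Iic x) (Set.Ioc x y) := by
    simp [Set.disjoint_left]
    intro a ha ha' ; linarith
  have hmeas : gaussianReal 0 1 (Set.Iic y)
      = gaussianReal 0 1 (Set.Iic x) + gaussianReal 0 1 (Set.Ioc x y) := by
    rw [hsplit, measure_union hdisj measurableSet_Ioc]
  simp only [Phi, cdf_eq_real, measureReal_def]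
  rw [hmeas, ENNReal.toReal_add (measure_ne_top _ _) (measure_ne_top _ _)]
  have : 0 < (gaussianReal 0 1 (Set.Ioc x y)).toReal :=
    ENNReal.toReal_pos hne (measure_ne_top _ _)
  linarith

theorem stmt_16 (b : ℝ) :
    (∀ z₁ z₂ : ℝ, |z₁ + b / 2| < |z₂ + b / 2| → fabP z₂ b < fabP z₁ b) ∧
      fabP (-b / 2) b = 1 ∧ ∀ z : ℝ, z ≠ -b / 2 → fabP z b < 1 := by
  set c := b / 2 with hc
  set g : ℝ → ℝ := fun t => Phi (c + t) - Phi (c - t) with hg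
  have hgmono : StrictMono g := by
    intro t₁ t₂ h
    have h1 : Phi (c + t₁) < Phi (c + t₂) := Phi_strictMono (by linarith)
    have h2 : Phi (c - t₂) < Phi (c - t₁) := Phi_strictMono (by linarith)
    simp only [hg]; linarith
  have hg0 : g 0 = 0 := by simp [hg]
  have hgodd : ∀ t, g (-t) = -g t := by intro t; simp only [hg]; ring_nf
  have habs : ∀ t : ℝ, |g t| = g |t| := by
    intro t
    rcases le_or_gt 0 t with h | h
    · rw [abs_of_nonneg h, abs_of_nonneg]
      rcases eq_or_lt_of_le h with h' | h'
      · rw [← h', hg0]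
      · exact (hgmono h').le.trans_eq' hg0
    · rw [abs_of_neg h, abs_of_neg (hg0 ▸ hgmono h), hgodd]
  have hfab : ∀ z : ℝ, fabP z b = 1 - |g (z + c)| := by
    intro z
    have h1 : z + b = c + (z + c) := by rw [hc]; ring
    have h2 : -z = c - (z + c) := by rw [hc]; ring
    simp only [fabP, hg, h1, h2]
  constructor
  · intro z₁ z₂ h
    rw [hfab z₁, hfab z₂, habs, habs]
    have := hgmono h
    linarith
  constructor
  · rw [hfab]
    have : -b / 2 + c = 0 := by rw [hc]; ring
    rw [this, hg0]; simp
  · intro z hz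
    rw [hfab]
    have hne : z + c ≠ 0 := by
      intro h; apply hz; rw [hc] at h; linarith
    have : (0:ℝ) < |z + c| := abs_pos.mpr hne
    rw [habs]
    have := hgmono this
    rw [hg0] at this
    linarith
end
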